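/- Let {f_j : j ∈ ℕ} ⊂ ℓ²(ℕ) be a complete Bessel system for ℓ²(ℕ) with constant B > 0, with transpose system v_i(j) = f_j(i), and let V ⊆ ℓ²(ℕ) be the closure of the span of {v_i : i ∈ ℕ} with orthonormal basis {w_k : k ∈ K} of V^⊥, where L = ℕ ⊔ K. Define e_j ∈ ℓ²(L) by e_j(i) = v_i(j) for i ∈ ℕ and e_j(k) = w_k(j) for k ∈ K. Then {e_j : j ∈ ℕ} is ω-linearly independent for ℓ²(ℕ): if c ∈ ℓ²(ℕ) and ∑_{j∈ℕ} c(j) e_j = 0 in ℓ²(L), then c = 0. -/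

import Mathlib

open scoped ComplexInnerProductSpace

private noncomputable def evalCLM' {ι : Type*} (l : ι) :
    lp (fun _ : ι => ℂ) 2 →L[ℂ] ℂ :=
  LinearMap.mkContinuous
    { toFun := fun x => x l
      map_add' := fun x y => by simp [lp.coeFn_add]
      map_smul' := fun a x => by simp [lp.coeFn_smul] }
    1 (fun x => by rw [one_mul]; exact lp.norm_apply_le_norm two_ne_zero x l)

private lemma orth_closure {H : Type*} [NormedAddCommGroup H] [InnerProductSpace ℂ H]
    [CompleteSpace H] (M : Submodule ℂ H) : M.topologicalClosureᗮ = Mᗮ := by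
  rw [← M.orthogonal_orthogonal_eq_closure, Submodule.triorthogonal_eq_orthogonal]

/-- **ω-linear independence of the column system built from a complete Bessel system.** Let
`{f j} ⊆ ℓ²(ℕ)` be a complete Bessel system with constant `B > 0`, with transpose rows
`v i (j) = f j (i)`, let `V` be the closure of the span of `{v i}` and `{w k}_{k ∈ K}` an
orthonormal basis of `Vᗮ`, with `L = ℕ ⊔ K`. Define the columns `e j ∈ ℓ²(L)` by
`e j (inl i) = v i (j)` and `e j (inr k) = w k (j)`. Then `{e j}` is ω-linearly independent
for `ℓ²(ℕ)`: if `c ∈ ℓ²(ℕ)` and `∑ c j • e j` converges to `0` in `ℓ²(L)`, then `c = 0`. -/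
theorem column_system_is_omega_independent
    (B : ℝ) (hB : 0 < B) (f : ℕ → lp (fun _ : ℕ => ℂ) 2)
    (hbessel : ∀ x : lp (fun _ : ℕ => ℂ) 2,
      ∑' j : ℕ, ‖(⟪x, f j⟫ : ℂ)‖ ^ 2 ≤ B * ‖x‖ ^ 2)
    (hcomplete : (Submodule.span ℂ (Set.range f)).topologicalClosure = ⊤)
    (v : ℕ → lp (fun _ : ℕ => ℂ) 2) (hv : ∀ i j : ℕ, v i j = f j i)
    (K : Type) [Countable K] (w : K → lp (fun _ : ℕ => ℂ) 2)
    (hw : Orthonormal ℂ w)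
    (hwspan : (Submodule.span ℂ (Set.range w)).topologicalClosure =
      ((Submodule.span ℂ (Set.range v)).topologicalClosure)ᗮ)
    (e : ℕ → lp (fun _ : ℕ ⊕ K => ℂ) 2)
    (hev : ∀ j i : ℕ, e j (Sum.inl i) = v i j)
    (hew : ∀ (j : ℕ) (k : K), e j (Sum.inr k) = w k j) :
    ∀ c : lp (fun _ : ℕ => ℂ) 2,
      HasSum (fun j : ℕ => c j • e j) 0 → c = 0 := by
  intro c hsum
  have hcoord : ∀ l : ℕ ⊕ K, HasSum (fun j : ℕ => c j * e j l) 0 := by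
    intro l
    have := hsum.mapL (evalCLM' l)
    simp only [map_smul, smul_eq_mul] at this; exact this
  set d : lp (fun _ : ℕ => ℂ) 2 := star c with hd
  have hdj : ∀ j, (starRingEnd ℂ) (d j) = c j := by
    intro j
    have : d j = star (c j) := by rw [hd, lp.coeFn_star]; rfl
    simp [this, RingHom.ext_iff]
  have hinner : ∀ g : lp (fun _ : ℕ => ℂ) 2,
      HasSum (fun j => c j * g j) 0 → ⟪d, g⟫ = 0 := by
    intro g hg
    have h1 : HasSum (fun j => (⟪d j, g j⟫ : ℂ)) 0 := by
      simpa [RCLike.inner_apply, hdj, mul_comm] using hg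
    exact (lp.hasSum_inner d g).unique h1
  -- d ∈ (span v)ᗮ
  have hkv : Submodule.span ℂ (Set.range v) ≤ LinearMap.ker (innerₛₗ ℂ d) :=
    Submodule.span_le.2 (by
      rintro _ ⟨i, rfl⟩
      simp only [SetLike.mem_coe, LinearMap.mem_ker, innerₛₗ_apply_apply]
      exact hinner (v i) (by simpa [hev] using hcoord (Sum.inl i)))
  have hdv : d ∈ (Submodule.span ℂ (Set.range v))ᗮ := by
    rw [Submodule.mem_orthogonal']
    intro u hu
    exact LinearMap.mem_ker.1 (hkv hu)
  have hkw : Submodule.span ℂ (Set.range w) ≤ LinearMap.ker (innerₛₗ ℂ d) :=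
    Submodule.span_le.2 (by
      rintro _ ⟨k, rfl⟩
      simp only [SetLike.mem_coe, LinearMap.mem_ker, innerₛₗ_apply_apply]
      exact hinner (w k) (by simpa [hew] using hcoord (Sum.inr k)))
  have hdw : d ∈ (Submodule.span ℂ (Set.range w))ᗮ := by
    rw [Submodule.mem_orthogonal']
    intro u hu
    exact LinearMap.mem_ker.1 (hkw hu)
  rw [← orth_closure] at hdv hdw
  rw [hwspan] at hdw
  have : (⟪d, d⟫ : ℂ) = 0 := Submodule.inner_left_of_mem_orthogonal hdv hdw
  have hd0 : d = 0 := inner_self_eq_zero.mp this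
  have : c = star d := by rw [hd, star_star]
  rw [this, hd0, star_zero]
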